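/- For any positive integer m and any element v ∈ F_{2^m} with v ≠ 0 and v ≠ 1, the trinomial F(x) = x^{2^{2m}+1} + x^{2^m+1} + v·x is a complete permutation polynomial over F_{2^{3m}}. -/

import Mathlib

lemma key {K : Type*} [Field K] [Fintype K] (m : ℕ)
    (hchar : CharP K 2) (hcard : Fintype.card K = 2 ^ (3 * m)) (c : K)
    (hc0 : c ≠ 0) (hcq : c ^ (2 ^ m) = c) :
    Function.Bijective (fun x : K => x ^ (2 ^ (2 * m) + 1) + x ^ (2 ^ m + 1) + c * x) := by
  haveI := hchar
  haveI : Fact (Nat.Prime 2) := ⟨Nat.prime_two⟩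
  set q := 2 ^ m with hq
  have htwo : (2 : K) = 0 := CharTwo.two_eq_zero
  have hadd : ∀ x y : K, (x + y) ^ q = x ^ q + y ^ q := fun x y => add_pow_char_pow ..
  have hself : ∀ x : K, x + x = 0 := CharTwo.add_self_eq_zero
  have hcube : ∀ x : K, ((x ^ q) ^ q) ^ q = x := by
    intro x
    have hqqq : q * q * q = 2 ^ (3 * m) := by
      rw [hq, ← pow_add, ← pow_add]; congr 1; ring
    rw [← pow_mul, ← pow_mul, show q * (q * q) = q * q * q by ring, hqqq, ← hcard,
      FiniteField.pow_card]
  set T : K → K := fun x => x + x ^ q + (x ^ q) ^ q with hT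
  have hTadd : ∀ x y : K, T (x + y) = T x + T y := by
    intro x y; simp only [hT, hadd]; ring
  have hTq : ∀ x : K, (T x) ^ q = T x := by
    intro x
    simp only [hT, hadd, hcube]
    ring
  have hform : ∀ x : K, x ^ (2 ^ (2 * m) + 1) + x ^ (2 ^ m + 1) + c * x
      = x * T x + x ^ 2 + c * x := by
    intro x
    have h2m : (2 : ℕ) ^ (2 * m) = q * q := by rw [two_mul, pow_add]
    rw [h2m, pow_succ, pow_mul, pow_succ]
    simp only [hT]
    linear_combination (-(x ^ 2)) * htwo
  have hTF : ∀ x : K, T (x * T x + x ^ 2 + c * x) = c * T x := by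
    intro x
    have h1 : T (x * T x) = T x ^ 2 := by
      have e1 : (x * T x) ^ q = x ^ q * T x := by rw [mul_pow, hTq]
      have e2 : ((x * T x) ^ q) ^ q = (x ^ q) ^ q * T x := by rw [e1, mul_pow, hTq]
      show x * T x + (x * T x) ^ q + ((x * T x) ^ q) ^ q = T x ^ 2
      rw [e2, e1]
      simp only [hT]
      ring
    have h2 : T (x ^ 2) = T x ^ 2 := by
      have e : ∀ z : K, (z ^ 2) ^ q = (z ^ q) ^ 2 := fun z => by
        rw [← pow_mul, mul_comm, pow_mul]
      simp only [hT, e, CharTwo.add_sq]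
    have h3 : T (c * x) = c * T x := by
      simp only [hT, mul_pow, hcq]
      ring
    rw [hTadd, hTadd, h1, h2, h3, hself (T x ^ 2), zero_add]
  rw [Fintype.bijective_iff_injective_and_card]
  refine ⟨?_, rfl⟩
  intro x y hxy
  simp only at hxy
  rw [hform, hform] at hxy
  have ht : T x = T y := by
    have := congrArg T hxy
    rw [hTF, hTF] at this
    exact mul_left_cancel₀ hc0 this
  rw [ht] at hxy
  have hfac : (x + y) * (T y + (x + y) + c) = 0 := by
    linear_combination hxy + (x * y + y * (T y) + y ^ 2 + c * y) * htwo
  have hxy0 : x + y = 0 := by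
    rcases mul_eq_zero.mp hfac with h | h
    · exact h
    · have hsum : x + y = T y + c := by
        linear_combination -h + (x + y) * htwo
      have hq1 : (x + y) ^ q = x + y := by
        rw [hsum, hadd, hTq, hcq]
      have hTsum0 : T (x + y) = 0 := by rw [hTadd, ht, hself]
      have hTsum : T (x + y) = x + y := by
        simp only [hT, hq1]
        rw [hself, zero_add]
      rw [hTsum] at hTsum0
      exact hTsum0
  linear_combination hxy0 - y * htwo

def IsCPP {K : Type*} [Field K] (f : K → K) : Prop :=
  Function.Bijective f ∧ Function.Bijective fun x => f x + x

theorem stmt4 {F K : Type*} [Field F] [Fintype F] [Field K] [Algebra F K]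
    (m : ℕ) (hm : 0 < m)
    (hF : Fintype.card F = 2 ^ m) (hK : Module.finrank F K = 3)
    (v : F) (hv0 : v ≠ 0) (hv1 : v ≠ 1) :
    IsCPP fun x : K =>
      x ^ (2 ^ (2 * m) + 1) + x ^ (2 ^ m + 1) + algebraMap F K v * x := by
  have htwoF : (2 : F) = 0 := by
    have h1 : ((Fintype.card F : F)) = 0 := FiniteField.cast_card_eq_zero F
    rw [hF] at h1
    push_cast at h1
    exact pow_eq_zero_iff hm.ne' |>.mp h1
  haveI hcharF : CharP F 2 := CharTwo.of_one_ne_zero_of_two_eq_zero one_ne_zero htwoF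
  haveI hcharK : CharP K 2 :=
    charP_of_injective_algebraMap (algebraMap F K).injective 2
  haveI : FiniteDimensional F K := FiniteDimensional.of_finrank_eq_succ hK
  haveI : Finite K := Module.finite_of_finite F
  haveI : Fintype K := Fintype.ofFinite K
  haveI : Fact (Nat.Prime 2) := ⟨Nat.prime_two⟩
  have hcard : Fintype.card K = 2 ^ (3 * m) := by
    rw [Module.card_eq_pow_finrank (K := F) (V := K), hF, hK, ← pow_mul, mul_comm]
  have hmap : ∀ a : F, (algebraMap F K a) ^ (2 ^ m) = algebraMap F K a := by
    intro a
    rw [← map_pow]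
    congr 1
    rw [← hF, FiniteField.pow_card]
  constructor
  · exact key m hcharK hcard _ ((map_ne_zero _).mpr hv0) (hmap v)
  · have hfe : (fun x : K => (x ^ (2 ^ (2 * m) + 1) + x ^ (2 ^ m + 1) + algebraMap F K v * x) + x)
        = fun x : K => x ^ (2 ^ (2 * m) + 1) + x ^ (2 ^ m + 1) + (algebraMap F K v + 1) * x := by
      funext x; ring
    simp only [hfe]
    have hc1 : algebraMap F K v + 1 ≠ 0 := by
      rw [show (1 : K) = algebraMap F K 1 by rw [map_one], ← map_add]
      refine (map_ne_zero _).mpr ?_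
      intro h
      apply hv1
      linear_combination h - htwoF
    have hcq1 : (algebraMap F K v + 1) ^ (2 ^ m) = algebraMap F K v + 1 := by
      rw [add_pow_char_pow, hmap, one_pow]
    exact key m hcharK hcard _ hc1 hcq1
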